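/- arXiv:1309.7230 — 2 statements merged into one kernel-verified Lean document; each statement's English description precedes it below -/
import Mathlib

section
/- Let N ≥ 1, s ∈ (0,1), and H(r,t) = r^{s - N/2} · ∫_0^{t/r} z^{s-1}/(z+1)^{N/2} dz for r, t > 0. If 0 < r₁ < r₂ and 0 < t₂ < t₁, then H(r₁, t₁) > H(r₂, t₂). -/
open Real

/-- The kernel `H(r,t) = r^{s-N/2} ∫_0^{t/r} z^{s-1}(z+1)^{-N/2} dz`. -/
noncomputable def Hker (N : ℕ) (s r t : ℝ) : ℝ :=
  r ^ (s - (N : ℝ) / 2) * ∫ z in (0:ℝ)..(t / r), z ^ (s - 1) / (z + 1) ^ ((N : ℝ) / 2)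

lemma Hker_integrable (N : ℕ) (s : ℝ) (hs : s ∈ Set.Ioo (0:ℝ) 1) (r t : ℝ)
    (hr : 0 < r) (ht : 0 ≤ t) :
    IntervalIntegrable (fun u => u ^ (s - 1) * (u + r) ^ (-((N:ℝ) / 2))) MeasureTheory.volume 0 t := by
  have hg : IntervalIntegrable (fun u : ℝ => u ^ (s - 1) * r ^ (-((N:ℝ) / 2)))
      MeasureTheory.volume 0 t :=
    (intervalIntegral.intervalIntegrable_rpow' (by linarith [hs.1] : (-1:ℝ) < s - 1)).mul_const _
  refine hg.mono_fun ?_ ?_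
  · rw [Set.uIoc_of_le ht]
    have hc : ContinuousOn (fun u : ℝ => u ^ (s - 1) * (u + r) ^ (-((N:ℝ) / 2))) (Set.Ioc 0 t) := by
      apply ContinuousOn.mul
      · exact continuousOn_id.rpow_const fun x hx => Or.inl (ne_of_gt hx.1)
      · exact (continuousOn_id.add continuousOn_const).rpow_const
          fun x hx => Or.inl (by have := hx.1; show x + r ≠ 0; exact ne_of_gt (by linarith))
    exact hc.aestronglyMeasurable measurableSet_Ioc
  · filter_upwards [MeasureTheory.ae_restrict_mem measurableSet_Ioc] with u hu
    rw [Set.uIoc_of_le ht] at hu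
    have hu0 : 0 < u := hu.1
    simp only [Real.norm_eq_abs]
    rw [abs_of_nonneg (mul_nonneg (Real.rpow_nonneg hu0.le _) (Real.rpow_nonneg (by linarith) _)),
      abs_of_nonneg (mul_nonneg (Real.rpow_nonneg hu0.le _) (Real.rpow_nonneg hr.le _))]
    have : (u + r) ^ (-((N:ℝ) / 2)) ≤ r ^ (-((N:ℝ) / 2)) :=
      Real.rpow_le_rpow_of_nonpos hr (by linarith) (neg_nonpos.mpr (by positivity))
    exact mul_le_mul_of_nonneg_left this (by positivity)

lemma Hker_eq (N : ℕ) (s : ℝ) (hs : s ∈ Set.Ioo (0:ℝ) 1) (r t : ℝ) (hr : 0 < r) (ht : 0 ≤ t) :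
    Hker N s r t = ∫ u in (0:ℝ)..t, u ^ (s - 1) * (u + r) ^ (-((N:ℝ) / 2)) := by
  have hcomp : (∫ u in (0:ℝ)..t, (u / r) ^ (s - 1) / (u / r + 1) ^ ((N : ℝ) / 2))
      = r • ∫ z in (0:ℝ)/r..t/r, z ^ (s - 1) / (z + 1) ^ ((N : ℝ) / 2) :=
    intervalIntegral.integral_comp_div (fun z => z ^ (s - 1) / (z + 1) ^ ((N : ℝ) / 2)) hr.ne'
  have key : (∫ u in (0:ℝ)..t, (u / r) ^ (s - 1) / (u / r + 1) ^ ((N : ℝ) / 2))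
      = ∫ u in (0:ℝ)..t, r ^ ((N:ℝ)/2 - s + 1) * (u ^ (s - 1) * (u + r) ^ (-((N:ℝ) / 2))) := by
    apply intervalIntegral.integral_congr
    intro u hu
    rw [Set.uIcc_of_le ht] at hu
    have hu0 : (0:ℝ) ≤ u := hu.1
    show (u / r) ^ (s - 1) / (u / r + 1) ^ ((N : ℝ) / 2)
      = r ^ ((N:ℝ)/2 - s + 1) * (u ^ (s - 1) * (u + r) ^ (-((N:ℝ) / 2)))
    have h1 : u / r + 1 = (u + r) / r := by field_simp
    rw [h1, Real.div_rpow hu0 hr.le, Real.div_rpow (by linarith) hr.le]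
    rw [Real.rpow_neg (by linarith), Real.rpow_add hr ((N:ℝ)/2 - s) 1,
      Real.rpow_sub hr ((N:ℝ)/2) s, Real.rpow_sub hr s 1, Real.rpow_one]
    have h2 : (0:ℝ) < u + r := by linarith
    have h3 : (u + r) ^ ((N:ℝ)/2) ≠ 0 := by positivity
    have h4 : r ^ s ≠ 0 := by positivity
    have h5 : r ^ ((N:ℝ)/2) ≠ 0 := by positivity
    field_simp
  rw [intervalIntegral.integral_const_mul] at key
  have h0 : (0:ℝ)/r = 0 := by simp
  rw [h0] at hcomp
  have this1 := hcomp.symm.trans key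
  rw [smul_eq_mul] at this1
  have hJ : (∫ z in (0:ℝ)..t/r, z ^ (s - 1) / (z + 1) ^ ((N : ℝ) / 2))
      = r ^ ((N:ℝ)/2 - s) * ∫ u in (0:ℝ)..t, u ^ (s - 1) * (u + r) ^ (-((N:ℝ) / 2)) := by
    apply mul_left_cancel₀ hr.ne'
    rw [this1, ← mul_assoc]
    congr 1
    rw [Real.rpow_add hr, Real.rpow_one]
    ring
  unfold Hker
  rw [hJ, ← mul_assoc, ← Real.rpow_add hr]
  simp

theorem Hker_strict_mono (N : ℕ) (hN : 1 ≤ N) (s : ℝ) (hs : s ∈ Set.Ioo (0:ℝ) 1)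
    (r₁ r₂ t₁ t₂ : ℝ) (hr₁ : 0 < r₁) (hr₁₂ : r₁ < r₂) (ht₂ : 0 < t₂) (ht₂₁ : t₂ < t₁) :
    Hker N s r₂ t₂ < Hker N s r₁ t₁ := by
  have hr₂ : 0 < r₂ := hr₁.trans hr₁₂
  have ht₁ : 0 < t₁ := ht₂.trans ht₂₁
  rw [Hker_eq N s hs r₂ t₂ hr₂ ht₂.le, Hker_eq N s hs r₁ t₁ hr₁ ht₁.le]
  have hi₁ := Hker_integrable N s hs r₁ t₂ hr₁ ht₂.le
  have hi₂ := Hker_integrable N s hs r₂ t₂ hr₂ ht₂.le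
  have hN2 : (0:ℝ) < (N:ℝ)/2 := by
    have : (1:ℝ) ≤ N := by exact_mod_cast hN
    linarith
  have step1 : (∫ u in (0:ℝ)..t₂, u ^ (s - 1) * (u + r₂) ^ (-((N:ℝ) / 2)))
      < ∫ u in (0:ℝ)..t₂, u ^ (s - 1) * (u + r₁) ^ (-((N:ℝ) / 2)) := by
    have hpos : 0 < ∫ u in (0:ℝ)..t₂,
        (u ^ (s - 1) * (u + r₁) ^ (-((N:ℝ) / 2)) - u ^ (s - 1) * (u + r₂) ^ (-((N:ℝ) / 2))) := by
      apply intervalIntegral.intervalIntegral_pos_of_pos_on (hi₁.sub hi₂)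
      · intro u hu
        have hu0 : 0 < u := hu.1
        have h1 : (u + r₂) ^ (-((N:ℝ) / 2)) < (u + r₁) ^ (-((N:ℝ) / 2)) :=
          Real.rpow_lt_rpow_of_neg (by linarith) (by linarith) (by linarith)
        have h2 : 0 < u ^ (s - 1) := Real.rpow_pos_of_pos hu0 _
        nlinarith
      · exact ht₂
    rw [intervalIntegral.integral_sub hi₁ hi₂] at hpos
    linarith
  have step2 : (∫ u in (0:ℝ)..t₂, u ^ (s - 1) * (u + r₁) ^ (-((N:ℝ) / 2)))
      ≤ ∫ u in (0:ℝ)..t₁, u ^ (s - 1) * (u + r₁) ^ (-((N:ℝ) / 2)) := by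
    have hi₃ := Hker_integrable N s hs r₁ t₁ hr₁ ht₁.le
    have hi₄ : IntervalIntegrable (fun u => u ^ (s - 1) * (u + r₁) ^ (-((N:ℝ) / 2)))
        MeasureTheory.volume t₂ t₁ := hi₃.mono_set (by
      rw [Set.uIcc_of_le ht₂₁.le, Set.uIcc_of_le ht₁.le]
      exact Set.Icc_subset_Icc ht₂.le le_rfl)
    have hsplit := intervalIntegral.integral_add_adjacent_intervals hi₁ hi₄
    have hnn : 0 ≤ ∫ u in t₂..t₁, u ^ (s - 1) * (u + r₁) ^ (-((N:ℝ) / 2)) := by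
      apply intervalIntegral.integral_nonneg ht₂₁.le
      intro u hu
      have : 0 ≤ u := le_trans ht₂.le hu.1
      positivity
    linarith
  linarith
end

section
/- Let s ∈ (0,1) and x₁ ∈ (0,1]. Then, with A = {y ∈ ℝ^N : y₁ > 0, |y - (1,0,...,0)| ≥ 1} ∩ {y : y₁ ≥ 1} and x = (x₁, 0, ..., 0), one has ∫_A |y - x|^{-N} (|y|² - 2y₁)^{-s} dy ≤ ω_{N-1} ∫_1^∞ τ^{-1}(τ² - 1)^{-s} dτ < ∞, where ω_{N-1} is the surface measure of the unit sphere in ℝ^N. -/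
open Real MeasureTheory Set Metric

private lemma my_measurable_rpow_const (c : ℝ) : Measurable fun x : ℝ => x ^ c := by
  have h : (fun x : ℝ => x ^ c) = fun x =>
      if x = 0 then (0:ℝ) ^ c
      else if x < 0 then Real.exp (Real.log x * c) * Real.cos (c * Real.pi)
      else Real.exp (Real.log x * c) := by
    funext x
    rcases lt_trichotomy x 0 with h|h|h
    · rw [if_neg h.ne, if_pos h, Real.rpow_def_of_neg h]
    · simp [h]
    · rw [if_neg h.ne', if_neg (not_lt.2 h.le), Real.rpow_def_of_pos h]
  rw [h]
  exact Measurable.ite (measurableSet_eq)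
    measurable_const
    (Measurable.ite measurableSet_Iio
      ((Real.measurable_log.mul_const c).exp.mul_const _)
      ((Real.measurable_log.mul_const c).exp))

private lemma my_meas_rpow {α : Type*} [MeasurableSpace α] {f : α → ℝ} (hf : Measurable f)
    (c : ℝ) : Measurable fun x => f x ^ c := (my_measurable_rpow_const c).comp hf

private lemma oneD_integrable {s : ℝ} (hs0 : 0 < s) (hs1 : s < 1) :
    IntegrableOn (fun τ : ℝ => τ⁻¹ * (τ ^ 2 - 1) ^ (-s)) (Set.Ioi 1) := by
  have hmeas : Measurable (fun τ : ℝ => τ⁻¹ * (τ ^ 2 - 1) ^ (-s)) :=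
    measurable_inv.mul (my_meas_rpow ((measurable_id.pow_const 2).sub measurable_const) (-s))
  have h12 : IntegrableOn (fun τ : ℝ => τ⁻¹ * (τ ^ 2 - 1) ^ (-s)) (Set.Ioc 1 2) := by
    have hdom : IntegrableOn (fun τ : ℝ => (τ - 1) ^ (-s)) (Set.Ioc 1 2) := by
      have h := (intervalIntegral.intervalIntegrable_rpow' (a := 0) (b := 1) (r := -s)
        (by linarith)).comp_sub_right 1
      norm_num at h
      exact h.1
    refine hdom.integrable.mono' hmeas.aestronglyMeasurable ?_
    rw [ae_restrict_iff' measurableSet_Ioc]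
    filter_upwards with τ hτ
    have h1 : (0:ℝ) < τ - 1 := by linarith [hτ.1]
    have h2 : τ - 1 ≤ τ ^ 2 - 1 := by nlinarith [hτ.1]
    have h3 : (τ ^ 2 - 1) ^ (-s) ≤ (τ - 1) ^ (-s) :=
      Real.rpow_le_rpow_of_nonpos h1 h2 (by linarith)
    have h4 : (0:ℝ) ≤ (τ ^ 2 - 1) ^ (-s) := Real.rpow_nonneg (by nlinarith [hτ.1]) _
    have hτ0 : (0:ℝ) < τ := by linarith [hτ.1]
    rw [Real.norm_eq_abs, abs_of_nonneg (mul_nonneg (by positivity) h4)]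
    calc τ⁻¹ * (τ ^ 2 - 1) ^ (-s) ≤ 1 * (τ ^ 2 - 1) ^ (-s) := by
          apply mul_le_mul_of_nonneg_right _ h4
          exact inv_le_one_of_one_le₀ (by linarith [hτ.1])
      _ = (τ ^ 2 - 1) ^ (-s) := one_mul _
      _ ≤ (τ - 1) ^ (-s) := h3
  have h2i : IntegrableOn (fun τ : ℝ => τ⁻¹ * (τ ^ 2 - 1) ^ (-s)) (Set.Ioi 2) := by
    have hdom : IntegrableOn (fun τ : ℝ => τ ^ (-1 - s)) (Set.Ioi 2) :=
      integrableOn_Ioi_rpow_of_lt (by linarith) (by norm_num)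
    refine hdom.integrable.mono' hmeas.aestronglyMeasurable ?_
    rw [ae_restrict_iff' measurableSet_Ioi]
    filter_upwards with τ hτ
    have hτ2 : (2:ℝ) < τ := hτ
    have hτ0 : (0:ℝ) < τ := by linarith
    have h2 : τ ≤ τ ^ 2 - 1 := by nlinarith
    have h3 : (τ ^ 2 - 1) ^ (-s) ≤ τ ^ (-s) :=
      Real.rpow_le_rpow_of_nonpos hτ0 h2 (by linarith)
    have h4 : (0:ℝ) ≤ (τ ^ 2 - 1) ^ (-s) := Real.rpow_nonneg (by nlinarith) _
    rw [Real.norm_eq_abs, abs_of_nonneg (mul_nonneg (by positivity) h4)]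
    calc τ⁻¹ * (τ ^ 2 - 1) ^ (-s) ≤ τ⁻¹ * τ ^ (-s) :=
          mul_le_mul_of_nonneg_left h3 (by positivity)
      _ = τ ^ (-1 - s) := by
          rw [← Real.rpow_neg_one τ, ← Real.rpow_add hτ0]
          ring_nf
  have hU : Set.Ioi (1:ℝ) = Set.Ioc 1 2 ∪ Set.Ioi 2 :=
    (Set.Ioc_union_Ioi_eq_Ioi (by norm_num)).symm
  rw [hU]
  exact h12.union h2i

open Module in
private lemma my_lintegral_norm {E : Type*} [NormedAddCommGroup E] [NormedSpace ℝ E]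
    [MeasurableSpace E] [BorelSpace E] [Nontrivial E] [FiniteDimensional ℝ E]
    (μ : Measure E) [μ.IsAddHaarMeasure] (f : ℝ → ENNReal) (hf : Measurable f) :
    ∫⁻ x, f ‖x‖ ∂μ = μ.toSphere Set.univ *
      ∫⁻ y in Set.Ioi (0:ℝ), ENNReal.ofReal (y ^ (finrank ℝ E - 1)) * f y := by
  have h0 : ∫⁻ x, f ‖x‖ ∂μ = ∫⁻ x : ({(0:E)}ᶜ : Set E), f ‖x.1‖ ∂(μ.comap Subtype.val) := by
    rw [lintegral_subtype_comap (measurableSet_singleton (0:E)).compl (fun x => f ‖x‖),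
      MeasureTheory.restrict_compl_singleton]
  have h1 : ∫⁻ x : ({(0:E)}ᶜ : Set E), f ‖x.1‖ ∂(μ.comap Subtype.val)
      = ∫⁻ b : sphere (0:E) 1 × Set.Ioi (0:ℝ), f b.2.1
          ∂(μ.toSphere.prod (Measure.volumeIoiPow (finrank ℝ E - 1))) := by
    convert (μ.measurePreserving_homeomorphUnitSphereProd).lintegral_comp_emb
      (Homeomorph.measurableEmbedding _)
      (fun z : sphere (0:E) 1 × Set.Ioi (0:ℝ) => f z.2.1) using 2
    simp [homeomorphUnitSphereProd]
  have h2 : ∫⁻ b : sphere (0:E) 1 × Set.Ioi (0:ℝ), f b.2.1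
          ∂(μ.toSphere.prod (Measure.volumeIoiPow (finrank ℝ E - 1)))
      = μ.toSphere Set.univ * ∫⁻ r : Set.Ioi (0:ℝ), f r.1
          ∂(Measure.volumeIoiPow (finrank ℝ E - 1)) := by
    have hm : Measurable fun b : sphere (0:E) 1 × Set.Ioi (0:ℝ) => f b.2.1 :=
      hf.comp (measurable_subtype_coe.comp measurable_snd)
    rw [MeasureTheory.lintegral_prod (fun b : sphere (0:E) 1 × Set.Ioi (0:ℝ) => f b.2.1) hm.aemeasurable]
    simp [lintegral_const, mul_comm]
  have h3 : ∫⁻ r : Set.Ioi (0:ℝ), f r.1 ∂(Measure.volumeIoiPow (finrank ℝ E - 1))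
      = ∫⁻ y in Set.Ioi (0:ℝ), ENNReal.ofReal (y ^ (finrank ℝ E - 1)) * f y := by
    have hm : Measurable fun r : Set.Ioi (0:ℝ) => f r.1 := hf.comp measurable_subtype_coe
    have hd : Measurable fun r : Set.Ioi (0:ℝ) => ENNReal.ofReal (r.1 ^ (finrank ℝ E - 1)) :=
      (measurable_subtype_coe.pow_const _).ennreal_ofReal
    have key := lintegral_withDensity_eq_lintegral_mul
      (Measure.comap (Subtype.val) (volume : Measure ℝ)) hd (g := fun r => f r.1) hm
    have : ∫⁻ r : Set.Ioi (0:ℝ), f r.1 ∂(Measure.volumeIoiPow (finrank ℝ E - 1))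
        = ∫⁻ r : Set.Ioi (0:ℝ), ENNReal.ofReal (r.1 ^ (finrank ℝ E - 1)) * f r.1
            ∂(Measure.comap Subtype.val volume) := key
    rw [this]
    exact lintegral_subtype_comap measurableSet_Ioi
      (fun y => ENNReal.ofReal (y ^ (finrank ℝ E - 1)) * f y)
  rw [h0, h1, h2, h3]



open Module in
private lemma my_integrable_norm {E : Type*} [NormedAddCommGroup E] [NormedSpace ℝ E]
    [MeasurableSpace E] [BorelSpace E] [Nontrivial E] [FiniteDimensional ℝ E]
    (μ : Measure E) [μ.IsAddHaarMeasure] (f : ℝ → ℝ) (hf : Measurable f)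
    (hnn : ∀ r, 0 ≤ f r)
    (hint : IntegrableOn (fun r => r ^ (finrank ℝ E - 1) * f r) (Set.Ioi 0)) :
    Integrable (fun x : E => f ‖x‖) μ := by
  refine ⟨(hf.comp measurable_norm).aestronglyMeasurable, ?_⟩
  rw [hasFiniteIntegral_iff_ofReal (Filter.Eventually.of_forall fun x => hnn _)]
  rw [my_lintegral_norm μ (fun r => ENNReal.ofReal (f r)) hf.ennreal_ofReal]
  refine ENNReal.mul_lt_top (measure_lt_top _ _) ?_
  have h : ∫⁻ y in Set.Ioi (0:ℝ), ENNReal.ofReal (y ^ (finrank ℝ E - 1)) * ENNReal.ofReal (f y)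
      = ∫⁻ y in Set.Ioi (0:ℝ), ENNReal.ofReal (y ^ (finrank ℝ E - 1) * f y) := by
    refine setLIntegral_congr_fun measurableSet_Ioi (fun y hy => ?_)
    rw [ENNReal.ofReal_mul (pow_nonneg hy.out.le _)]
  rw [h]
  exact hint.lintegral_lt_top



theorem integral_bound_outside_ball (N : ℕ) (hN : 0 < N) (s : ℝ) (hs : s ∈ Set.Ioo (0:ℝ) 1)
    (x₁ : ℝ) (hx₁ : x₁ ∈ Set.Ioc (0:ℝ) 1) :
    -- `e₁ = (1,0,…,0)`, `x = (x₁,0,…,0)`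
    let e₁ : EuclideanSpace ℝ (Fin N) := WithLp.toLp 2 (fun i => if i = (⟨0, hN⟩ : Fin N) then 1 else 0)
    let x : EuclideanSpace ℝ (Fin N) := WithLp.toLp 2 (fun i => if i = (⟨0, hN⟩ : Fin N) then x₁ else 0)
    let A : Set (EuclideanSpace ℝ (Fin N)) :=
      {y | 0 < y ⟨0, hN⟩ ∧ 1 ≤ ‖y - e₁‖} ∩ {y | 1 ≤ y ⟨0, hN⟩}
    -- `ω` is the surface measure of the unit sphere in `ℝ^N`
    let ω : ℝ := (N : ℝ) * (volume (Metric.ball (0 : EuclideanSpace ℝ (Fin N)) 1)).toReal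
    (∫ y in A, ‖y - x‖ ^ (-(N : ℝ)) * (‖y‖ ^ 2 - 2 * y ⟨0, hN⟩) ^ (-s))
        ≤ ω * ∫ τ in Set.Ioi (1:ℝ), τ⁻¹ * (τ ^ 2 - 1) ^ (-s) ∧
      IntegrableOn (fun τ : ℝ => τ⁻¹ * (τ ^ 2 - 1) ^ (-s)) (Set.Ioi 1) := by
  intro e₁ x A ω
  set i0 : Fin N := ⟨0, hN⟩ with hi0
  haveI : Nonempty (Fin N) := ⟨i0⟩
  haveI : Nontrivial (EuclideanSpace ℝ (Fin N)) := by
    refine nontrivial_of_ne (EuclideanSpace.single i0 (1:ℝ)) 0 fun h => ?_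
    have h1 : ‖EuclideanSpace.single i0 (1:ℝ)‖ = 0 := by rw [h]; simp
    rw [EuclideanSpace.norm_single] at h1
    norm_num at h1
  refine ⟨?_, oneD_integrable hs.1 hs.2⟩
  -- the radial profile
  set φ : ℝ → ℝ := fun r => r ^ (-(N:ℝ)) * (r ^ 2 - 1) ^ (-s) with hφ
  set F : ℝ → ℝ := (Set.Ici (1:ℝ)).indicator φ with hF
  have hφmeas : Measurable φ :=
    (my_meas_rpow measurable_id _).mul
      (my_meas_rpow ((measurable_id.pow_const 2).sub measurable_const) _)
  have hFmeas : Measurable F := hφmeas.indicator measurableSet_Ici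
  have hFnn : ∀ r, 0 ≤ F r := fun r => Set.indicator_nonneg
    (fun r hr => mul_nonneg (Real.rpow_nonneg (le_trans zero_le_one hr) _)
      (Real.rpow_nonneg (by nlinarith [Set.mem_Ici.mp hr]) _)) r
  have key : ∀ r : ℝ, 1 ≤ r → r ^ (N - 1) * φ r = r⁻¹ * (r ^ 2 - 1) ^ (-s) := by
    intro r hr
    have hr0 : (0:ℝ) < r := lt_of_lt_of_le one_pos hr
    have hpp : (r:ℝ) ^ (N - 1) * r ^ (-(N:ℝ)) = r⁻¹ := by
      rw [← Real.rpow_natCast r (N - 1), ← Real.rpow_add hr0, ← Real.rpow_neg_one r]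
      congr 1
      push_cast [Nat.cast_sub hN]
      ring
    rw [hφ, ← mul_assoc, hpp]
  have heq : (fun r : ℝ => r ^ (N - 1) * F r)
      = (Set.Ici (1:ℝ)).indicator (fun r => r ^ (N - 1) * φ r) := by
    funext r
    by_cases hr : r ∈ Set.Ici (1:ℝ) <;>
      simp [hF, Set.indicator_of_mem, Set.indicator_of_notMem, hr]
  have hG : IntegrableOn (fun r : ℝ => r ^ (N - 1) * F r) (Set.Ioi 0) := by
    have h1 : IntegrableOn (fun τ : ℝ => τ⁻¹ * (τ ^ 2 - 1) ^ (-s)) (Set.Ioi 1) :=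
      oneD_integrable hs.1 hs.2
    have h2 : IntegrableOn (fun r : ℝ => r ^ (N - 1) * φ r) (Set.Ioi 1) := by
      refine h1.congr ?_
      filter_upwards [ae_restrict_mem measurableSet_Ioi] with r hr
      exact (key r hr.le).symm
    have h3 : IntegrableOn (fun r : ℝ => r ^ (N - 1) * φ r) (Set.Ici 1) :=
      (Iff.mpr integrableOn_Ici_iff_integrableOn_Ioi) h2
    have hsub : Set.Ici (1:ℝ) ∩ Set.Ioi 0 = Set.Ici 1 :=
      Set.inter_eq_left.mpr fun r hr => Set.mem_Ioi.mpr (lt_of_lt_of_le one_pos hr)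
    rw [heq, IntegrableOn, integrable_indicator_iff measurableSet_Ici, IntegrableOn,
      Measure.restrict_restrict measurableSet_Ici, hsub]
    exact h3
  have hIF : Integrable (fun z : EuclideanSpace ℝ (Fin N) => F ‖z‖) := by
    refine my_integrable_norm volume F hFmeas hFnn ?_
    have hrk : Module.finrank ℝ (EuclideanSpace ℝ (Fin N)) = N := finrank_euclideanSpace_fin
    rw [hrk]
    exact hG
  have hg : Integrable (fun y : EuclideanSpace ℝ (Fin N) => F ‖y - e₁‖) :=
    hIF.comp_sub_right e₁
  -- geometry
  have he1 : e₁ = EuclideanSpace.single i0 (1:ℝ) := by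
    ext j; simp [EuclideanSpace.single_apply, e₁, hi0]
  have hxx : x = EuclideanSpace.single i0 x₁ := by
    ext j; simp [EuclideanSpace.single_apply, x, hi0]
  have hip : ∀ (a : ℝ) (y : EuclideanSpace ℝ (Fin N)),
      @inner ℝ _ _ y (EuclideanSpace.single i0 a) = a * y i0 := by
    intro a y
    rw [EuclideanSpace.inner_single_right]
    simp
  have h_e : ∀ y : EuclideanSpace ℝ (Fin N), ‖y - e₁‖ ^ 2 = ‖y‖ ^ 2 - 2 * y i0 + 1 := by
    intro y
    rw [he1, norm_sub_sq_real, hip, EuclideanSpace.norm_single]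
    norm_num
  have h_x : ∀ y : EuclideanSpace ℝ (Fin N),
      ‖y - x‖ ^ 2 = ‖y‖ ^ 2 - 2 * x₁ * y i0 + x₁ ^ 2 := by
    intro y
    rw [hxx, norm_sub_sq_real, hip, EuclideanSpace.norm_single, Real.norm_eq_abs, sq_abs]
    ring
  have hev : Measurable fun y : EuclideanSpace ℝ (Fin N) => y i0 := (measurable_pi_apply i0).comp (WithLp.measurable_ofLp 2 _)
  have hA : MeasurableSet A := by
    have hnorm : Measurable fun y : EuclideanSpace ℝ (Fin N) => ‖y - e₁‖ :=
      (measurable_id.sub measurable_const).norm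
    have h1 : MeasurableSet {y : EuclideanSpace ℝ (Fin N) | 0 < y i0 ∧ 1 ≤ ‖y - e₁‖} :=
      (measurableSet_lt measurable_const hev).inter (measurableSet_le measurable_const hnorm)
    exact h1.inter (measurableSet_le measurable_const hev)
  have hfm : Measurable fun y : EuclideanSpace ℝ (Fin N) =>
      ‖y - x‖ ^ (-(N:ℝ)) * (‖y‖ ^ 2 - 2 * y i0) ^ (-s) :=
    (my_meas_rpow ((measurable_id.sub measurable_const).norm) _).mul
      (my_meas_rpow ((measurable_norm.pow_const 2).sub (hev.const_mul 2)) _)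
  have hbnd : ∀ y ∈ A, ‖y - x‖ ^ (-(N:ℝ)) * (‖y‖ ^ 2 - 2 * y i0) ^ (-s) ≤ F ‖y - e₁‖ := by
    intro y hy
    obtain ⟨⟨hy0, hy1⟩, hy2⟩ := hy
    have hb : ‖y‖ ^ 2 - 2 * y i0 = ‖y - e₁‖ ^ 2 - 1 := by linarith [h_e y]
    have hu1 : 1 ≤ y i0 := hy2
    have hprod : 0 ≤ (1 - x₁) * (2 * y i0 - 1 - x₁) :=
      mul_nonneg (by linarith [hx₁.2]) (by linarith [hx₁.2])
    have hle : ‖y - e₁‖ ≤ ‖y - x‖ := by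
      nlinarith [h_e y, h_x y, norm_nonneg (y - x), norm_nonneg (y - e₁), hprod]
    rw [hb, hF, Set.indicator_of_mem (Set.mem_Ici.mpr hy1) φ]
    apply mul_le_mul_of_nonneg_right
    · exact Real.rpow_le_rpow_of_nonpos (lt_of_lt_of_le one_pos hy1) hle
        (neg_nonpos.mpr (Nat.cast_nonneg N))
    · exact Real.rpow_nonneg (by nlinarith) _
  have hnn : ∀ y ∈ A, 0 ≤ ‖y - x‖ ^ (-(N:ℝ)) * (‖y‖ ^ 2 - 2 * y i0) ^ (-s) := by
    intro y hy
    obtain ⟨⟨hy0, hy1⟩, hy2⟩ := hy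
    have hb : ‖y‖ ^ 2 - 2 * y i0 = ‖y - e₁‖ ^ 2 - 1 := by linarith [h_e y]
    refine mul_nonneg (Real.rpow_nonneg (norm_nonneg _) _) ?_
    rw [hb]
    exact Real.rpow_nonneg (by nlinarith) _
  have hfi : IntegrableOn (fun y : EuclideanSpace ℝ (Fin N) =>
      ‖y - x‖ ^ (-(N:ℝ)) * (‖y‖ ^ 2 - 2 * y i0) ^ (-s)) A := by
    refine (hg.integrableOn).mono' hfm.aestronglyMeasurable ?_
    rw [ae_restrict_iff' hA]
    filter_upwards with y hy
    rw [Real.norm_eq_abs, abs_of_nonneg (hnn y hy)]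
    exact hbnd y hy
  calc (∫ y in A, ‖y - x‖ ^ (-(N : ℝ)) * (‖y‖ ^ 2 - 2 * y i0) ^ (-s))
      ≤ ∫ y in A, F ‖y - e₁‖ := setIntegral_mono_on hfi hg.integrableOn hA hbnd
    _ ≤ ∫ y : EuclideanSpace ℝ (Fin N), F ‖y - e₁‖ :=
        setIntegral_le_integral hg (Filter.Eventually.of_forall fun y => hFnn _)
    _ = ∫ z : EuclideanSpace ℝ (Fin N), F ‖z‖ :=
        integral_sub_right_eq_self (fun z : EuclideanSpace ℝ (Fin N) => F ‖z‖) e₁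
    _ = ω * ∫ τ in Set.Ioi (1:ℝ), τ⁻¹ * (τ ^ 2 - 1) ^ (-s) := by
        rw [integral_fun_norm_addHaar (volume : Measure (EuclideanSpace ℝ (Fin N))) F]
        have hrk : Module.finrank ℝ (EuclideanSpace ℝ (Fin N)) = N := finrank_euclideanSpace_fin
        rw [hrk, nsmul_eq_mul, smul_eq_mul, ← mul_assoc]
        show ω * _ = ω * _
        congr 1
        calc ∫ r in Set.Ioi (0:ℝ), r ^ (N - 1) • F r
            = ∫ r in Set.Ioi (0:ℝ),
                (Set.Ici (1:ℝ)).indicator (fun r => r ^ (N - 1) * φ r) r := by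
              refine setIntegral_congr_fun measurableSet_Ioi fun r _ => ?_
              rw [smul_eq_mul]
              exact congrFun heq r
          _ = ∫ r in Set.Ioi (0:ℝ) ∩ Set.Ici 1, r ^ (N - 1) * φ r :=
              setIntegral_indicator measurableSet_Ici
          _ = ∫ r in Set.Ici (1:ℝ), r ^ (N - 1) * φ r := by
              have h01 : Set.Ioi (0:ℝ) ∩ Set.Ici 1 = Set.Ici 1 :=
                Set.inter_eq_right.mpr fun r hr => lt_of_lt_of_le one_pos (Set.mem_Ici.mp hr)
              rw [h01]
          _ = ∫ r in Set.Ioi (1:ℝ), r ^ (N - 1) * φ r := integral_Ici_eq_integral_Ioi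
          _ = ∫ τ in Set.Ioi (1:ℝ), τ⁻¹ * (τ ^ 2 - 1) ^ (-s) :=
              setIntegral_congr_fun measurableSet_Ioi fun r hr => key r (le_of_lt hr)
end
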